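/- Let f* be an optimal randomized prediction rule for the DDP-constrained fair classification problem: f* satisfies DDP(Ŷ, S) ≤ ε and its risk E[1{Ŷ ≠ Y}] is minimal among all randomized prediction rules Q_{Ŷ|X,S} satisfying DDP(Ŷ, S) ≤ ε. Suppose Y = h(X, S) for a deterministic function h : 𝒳 × 𝒮 → 𝒴, and the majority sensitive attribute s_max ∈ 𝒮 satisfies P_S(s_max) = 1/2 + δ for some δ > 0. Then for the prediction variable Ŷ induced by f*, for every s ∈ 𝒮: TV(P_{Ŷ|S=s}, P_{Y|S=s_max}) ≤ (1/2 + 1/(4δ)) · ε. -/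

import Mathlib

set_option linter.unusedSectionVars false
set_option linter.unusedVariables false


open Finset

noncomputable section

variable {𝒳 𝒴 𝒮 : Type*} [Fintype 𝒳] [Fintype 𝒴] [Fintype 𝒮] [DecidableEq 𝒴]

/-- Total variation distance between two finitely supported distributions on `𝒴`,
`TV(p, q) = (1/2) ∑ y, |p y - q y|`. -/
def TV (p q : 𝒴 → ℝ) : ℝ := (1 / 2) * ∑ y, |p y - q y|

/-- Marginal distribution of the sensitive attribute `S` under the joint `P` of `(X, Y, S)`. -/
def margS (P : 𝒳 → 𝒴 → 𝒮 → ℝ) (s : 𝒮) : ℝ := ∑ x, ∑ y, P x y s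

/-- Conditional distribution of the label `Y` given `S = s`. -/
def condYS (P : 𝒳 → 𝒴 → 𝒮 → ℝ) (s : 𝒮) (y : 𝒴) : ℝ := (∑ x, P x y s) / margS P s

/-- A randomized prediction rule `Q`: for every `(x, s)`, `Q x s` is a probability
distribution on labels. -/
def IsRule (Q : 𝒳 → 𝒮 → 𝒴 → ℝ) : Prop :=
  (∀ x s y, 0 ≤ Q x s y) ∧ ∀ x s, ∑ y, Q x s y = 1

/-- The risk `E[1{Ŷ ≠ Y}]` of the rule `Q` under the joint distribution induced by `P` and
`Q` (in which `Ŷ` is conditionally independent of `Y` given `(X, S)`). -/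
def risk (P : 𝒳 → 𝒴 → 𝒮 → ℝ) (Q : 𝒳 → 𝒮 → 𝒴 → ℝ) : ℝ :=
  ∑ x, ∑ y, ∑ s, ∑ yh, P x y s * Q x s yh * (if yh = y then (0 : ℝ) else 1)

/-- Joint distribution of `(Ŷ, S)` induced by `P` and the rule `Q`. -/
def jointYhatS (P : 𝒳 → 𝒴 → 𝒮 → ℝ) (Q : 𝒳 → 𝒮 → 𝒴 → ℝ) (yh : 𝒴) (s : 𝒮) : ℝ :=
  ∑ x, ∑ y, P x y s * Q x s yh

/-- Marginal distribution of the prediction `Ŷ`. -/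
def margYhat (P : 𝒳 → 𝒴 → 𝒮 → ℝ) (Q : 𝒳 → 𝒮 → 𝒴 → ℝ) (yh : 𝒴) : ℝ :=
  ∑ s, jointYhatS P Q yh s

/-- Conditional distribution of the prediction `Ŷ` given `S = s`. -/
def condYhatS (P : 𝒳 → 𝒴 → 𝒮 → ℝ) (Q : 𝒳 → 𝒮 → 𝒴 → ℝ) (s : 𝒮) (yh : 𝒴) : ℝ :=
  jointYhatS P Q yh s / margS P s

/-- Difference of demographic parity of the prediction `Ŷ` induced by rule `Q`:
`DDP(Ŷ, S) = ∑_{y, s} |P(Ŷ=y | S=s) - P(Ŷ=y)|`. -/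
def DDP (P : 𝒳 → 𝒴 → 𝒮 → ℝ) (Q : 𝒳 → 𝒮 → 𝒴 → ℝ) : ℝ :=
  ∑ yh, ∑ s, |condYhatS P Q s yh - margYhat P Q yh|

lemma tv_nonneg (p q : 𝒴 → ℝ) : 0 ≤ TV p q := by
  have : (0:ℝ) ≤ ∑ y, |p y - q y| := Finset.sum_nonneg fun y _ => abs_nonneg _
  unfold TV; linarith

lemma tv_symm (p q : 𝒴 → ℝ) : TV p q = TV q p := by
  unfold TV; congr 1; apply Finset.sum_congr rfl; intro y _; rw [abs_sub_comm]

lemma tv_triangle (p q r : 𝒴 → ℝ) : TV p r ≤ TV p q + TV q r := by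
  unfold TV
  rw [← mul_add, ← Finset.sum_add_distrib]
  have : ∑ y, |p y - r y| ≤ ∑ y, (|p y - q y| + |q y - r y|) := by
    apply Finset.sum_le_sum; intro y _
    calc |p y - r y| = |(p y - q y) + (q y - r y)| := by ring_nf
      _ ≤ _ := abs_add_le _ _
  linarith

lemma min_half (a b : ℝ) : min a b = (a + b - |a - b|) / 2 := by
  rcases le_total a b with hle | hle
  · rw [min_eq_left hle, abs_of_nonpos (by linarith)]; ring
  · rw [min_eq_right hle, abs_of_nonneg (by linarith)]; ring

lemma sum_min (p q : 𝒴 → ℝ) (hp : ∑ y, p y = 1) (hq : ∑ y, q y = 1) :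
    ∑ y, min (p y) (q y) = 1 - TV p q := by
  have : ∑ y, min (p y) (q y) = ∑ y, ((p y + q y - |p y - q y|) / 2) := by
    apply Finset.sum_congr rfl; intro y _; exact min_half _ _
  rw [this]
  unfold TV
  have e : ∑ y, ((p y + q y - |p y - q y|) / 2)
      = ((∑ y, p y) + (∑ y, q y) - ∑ y, |p y - q y|) / 2 := by
    rw [sub_div, add_div, Finset.sum_div, Finset.sum_div, Finset.sum_div,
      ← Finset.sum_add_distrib, ← Finset.sum_sub_distrib]
    apply Finset.sum_congr rfl; intro y _; ring
  rw [e, hp, hq]; ring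

/-- Maximal coupling transition kernel from `a` to `q`. -/
def kernel (a q : 𝒴 → ℝ) (c y : 𝒴) : ℝ :=
  (if y = c then (if a c = 0 then 1 else min (a c) (q c) / a c) else 0) +
  (if a c = 0 then 0 else
    ((a c - min (a c) (q c)) / a c) *
      (if (∑ z, (a z - min (a z) (q z))) = 0 then 0
       else (q y - min (a y) (q y)) / (∑ z, (a z - min (a z) (q z)))))

lemma t_nonneg (a q : 𝒴 → ℝ) : 0 ≤ ∑ z, (a z - min (a z) (q z)) :=
  Finset.sum_nonneg fun z _ => by simp [min_le_left]

lemma t_eq (a q : 𝒴 → ℝ) (ha1 : ∑ y, a y = 1) (hq1 : ∑ y, q y = 1) :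
    ∑ z, (a z - min (a z) (q z)) = ∑ z, (q z - min (a z) (q z)) := by
  rw [Finset.sum_sub_distrib, Finset.sum_sub_distrib, ha1, hq1]

lemma t_zero_a (a q : 𝒴 → ℝ) (ht : ∑ z, (a z - min (a z) (q z)) = 0) :
    ∀ z, a z = min (a z) (q z) := by
  intro z
  have := (Finset.sum_eq_zero_iff_of_nonneg
    (fun z _ => by simp [min_le_left] : ∀ z ∈ univ, (0:ℝ) ≤ a z - min (a z) (q z))).1 ht z
    (mem_univ z)
  linarith

lemma t_zero_q (a q : 𝒴 → ℝ) (ha1 : ∑ y, a y = 1) (hq1 : ∑ y, q y = 1)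
    (ht : ∑ z, (a z - min (a z) (q z)) = 0) : ∀ z, q z = min (a z) (q z) := by
  rw [t_eq a q ha1 hq1] at ht
  intro z
  have := (Finset.sum_eq_zero_iff_of_nonneg
    (fun z _ => by simp [min_le_right] : ∀ z ∈ univ, (0:ℝ) ≤ q z - min (a z) (q z))).1 ht z
    (mem_univ z)
  linarith

lemma kernel_nonneg (a q : 𝒴 → ℝ) (ha0 : ∀ y, 0 ≤ a y) (hq0 : ∀ y, 0 ≤ q y) (c y : 𝒴) :
    0 ≤ kernel a q c y := by
  have h1 : 0 ≤ min (a c) (q c) := le_min (ha0 c) (hq0 c)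
  have h3 : 0 ≤ q y - min (a y) (q y) := by simp [min_le_right]
  have ht := t_nonneg a q
  unfold kernel
  by_cases hac : a c = 0
  · simp only [hac, if_true]
    apply add_nonneg _ le_rfl
    split <;> norm_num
  · have hac' : 0 < a c := lt_of_le_of_ne (ha0 c) (Ne.symm hac)
    have h2 : 0 ≤ min (a c) (q c) / a c := by positivity
    have h4 : 0 ≤ (a c - min (a c) (q c)) / a c :=
      div_nonneg (by simp [min_le_left]) hac'.le
    simp only [hac, if_false]
    apply add_nonneg
    · split
      · exact h2
      · exact le_rfl
    · apply mul_nonneg h4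
      split
      · exact le_rfl
      · rcases lt_or_eq_of_le ht with ht' | ht'
        · positivity
        · exact absurd ht'.symm (by assumption)

lemma kernel_row_sum (a q : 𝒴 → ℝ) (ha1 : ∑ y, a y = 1) (hq1 : ∑ y, q y = 1) (c : 𝒴) :
    ∑ y, kernel a q c y = 1 := by
  unfold kernel
  rw [Finset.sum_add_distrib]
  have e1 : ∑ y, (if y = c then (if a c = 0 then 1 else min (a c) (q c) / a c) else 0)
      = (if a c = 0 then 1 else min (a c) (q c) / a c) := by
    rw [Finset.sum_ite_eq' univ c]
    simp
  rw [e1]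
  by_cases hac : a c = 0
  · simp [hac]
  · simp only [hac, if_false]
    set t := ∑ z, (a z - min (a z) (q z)) with htdef
    by_cases ht : t = 0
    · have hmin := t_zero_a a q ht c
      simp only [ht, if_true]
      rw [← hmin]
      field_simp
      simp
    · simp only [ht, if_false]
      rw [← Finset.mul_sum]
      have : ∑ y, (q y - min (a y) (q y)) / t = 1 := by
        rw [← Finset.sum_div, ← t_eq a q ha1 hq1, div_self ht]
      rw [this, mul_one]
      field_simp
      ring

lemma kernel_marginal (a q : 𝒴 → ℝ) (ha0 : ∀ y, 0 ≤ a y) (hq0 : ∀ y, 0 ≤ q y)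
    (ha1 : ∑ y, a y = 1) (hq1 : ∑ y, q y = 1) (y : 𝒴) :
    ∑ c, a c * kernel a q c y = q y := by
  set t := ∑ z, (a z - min (a z) (q z)) with htdef
  set w := (if t = 0 then (0:ℝ) else (q y - min (a y) (q y)) / t) with hwdef
  unfold kernel
  simp only [← htdef, ← hwdef]
  have hsplit : ∑ c, a c * ((if y = c then (if a c = 0 then 1 else min (a c) (q c) / a c) else 0)
        + (if a c = 0 then 0 else ((a c - min (a c) (q c)) / a c) * w))
      = (∑ c, (if y = c then a c * (if a c = 0 then 1 else min (a c) (q c) / a c) else 0))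
        + ∑ c, (a c - min (a c) (q c)) * w := by
    rw [← Finset.sum_add_distrib]
    apply Finset.sum_congr rfl; intro c _
    by_cases hac : a c = 0
    · have hm : min (a c) (q c) = 0 := by rw [hac]; exact min_eq_left (hq0 c)
      simp only [hac, hm, if_true, sub_zero, zero_mul, mul_zero, if_pos]
      simp [hq0 c]
    · simp only [hac, if_false]
      rw [mul_add]
      congr 1
      · rw [mul_ite, mul_zero]
      · field_simp
  rw [hsplit]
  have e0 : ∑ c, (if y = c then a c * (if a c = 0 then 1 else min (a c) (q c) / a c) else 0)
      = a y * (if a y = 0 then 1 else min (a y) (q y) / a y) := by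
    rw [Finset.sum_ite_eq univ y]
    simp
  have e1 : a y * (if a y = 0 then 1 else min (a y) (q y) / a y) = min (a y) (q y) := by
    by_cases hay : a y = 0
    · have hm : min (a y) (q y) = 0 := by rw [hay]; exact min_eq_left (hq0 y)
      rw [if_pos hay, mul_one, hm, hay]
    · simp only [hay, if_false]
      field_simp
  rw [e0, e1, ← Finset.sum_mul, ← htdef]
  by_cases ht : t = 0
  · have := t_zero_q a q ha1 hq1 (htdef ▸ ht) y
    simp only [hwdef, ht, if_true, mul_zero]
    linarith
  · simp only [hwdef, ht, if_false]
    rw [mul_div_cancel₀ _ ht]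
    ring

lemma kernel_diag (a q : 𝒴 → ℝ) (ha0 : ∀ y, 0 ≤ a y) (hq0 : ∀ y, 0 ≤ q y) (c : 𝒴) :
    a c * (1 - kernel a q c c) ≤ a c - min (a c) (q c) := by
  by_cases hac : a c = 0
  · have hm : min (a c) (q c) = 0 := by rw [hac]; exact min_eq_left (hq0 c)
    simp [kernel, hac, hm]
  · have hac' : 0 < a c := lt_of_le_of_ne (ha0 c) (Ne.symm hac)
    have hk : min (a c) (q c) / a c ≤ kernel a q c c := by
      unfold kernel
      simp only [if_pos rfl, hac, if_false, if_true]
      have h2 : 0 ≤ ((a c - min (a c) (q c)) / a c) *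
          (if (∑ z, (a z - min (a z) (q z))) = 0 then 0
           else (q c - min (a c) (q c)) / (∑ z, (a z - min (a z) (q z)))) := by
        apply mul_nonneg (div_nonneg (by simp [min_le_left]) hac'.le)
        split
        · exact le_rfl
        · exact div_nonneg (by simp [min_le_right]) (t_nonneg a q)
      linarith
    calc a c * (1 - kernel a q c c) ≤ a c * (1 - min (a c) (q c) / a c) :=
          mul_le_mul_of_nonneg_left (by linarith) hac'.le
      _ = a c - min (a c) (q c) := by field_simp

/-! ### auxiliary lemmas -/

lemma tv_self (p : 𝒴 → ℝ) : TV p p = 0 := by simp [TV]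

lemma sum_rot (F : 𝒳 → 𝒴 → 𝒮 → ℝ) :
    ∑ x, ∑ y, ∑ s, F x y s = ∑ s, ∑ x, ∑ y, F x y s := by
  have h1 : ∀ x : 𝒳, ∑ y, ∑ s, F x y s = ∑ s, ∑ y, F x y s := fun x => Finset.sum_comm
  simp_rw [h1]
  exact Finset.sum_comm

lemma risk_eq (P : 𝒳 → 𝒴 → 𝒮 → ℝ) (Q : 𝒳 → 𝒮 → 𝒴 → ℝ)
    (hQ1 : ∀ x s, ∑ y, Q x s y = 1) :
    risk P Q = ∑ x, ∑ y, ∑ s, P x y s * (1 - Q x s y) := by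
  unfold risk
  apply Finset.sum_congr rfl; intro x _
  apply Finset.sum_congr rfl; intro y _
  apply Finset.sum_congr rfl; intro s _
  have e : ∑ yh, P x y s * Q x s yh * (if yh = y then (0:ℝ) else 1)
      = (∑ yh, P x y s * Q x s yh) - ∑ yh, (if yh = y then P x y s * Q x s yh else 0) := by
    rw [← Finset.sum_sub_distrib]
    apply Finset.sum_congr rfl; intro yh _
    by_cases hy : yh = y <;> simp [hy]
  rw [e, Finset.sum_ite_eq' univ y, ← Finset.mul_sum, hQ1]
  simp only [mem_univ, if_true]
  ring

lemma det_sum (P : 𝒳 → 𝒴 → 𝒮 → ℝ) (h : 𝒳 → 𝒮 → 𝒴)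
    (hdet : ∀ x y s, y ≠ h x s → P x y s = 0) (x : 𝒳) (s : 𝒮) (g : 𝒴 → ℝ) :
    ∑ y, P x y s * g y = P x (h x s) s * g (h x s) := by
  apply Finset.sum_eq_single
  · intro y _ hy; rw [hdet x y s hy, zero_mul]
  · intro habs; exact absurd (mem_univ _) habs

lemma fiber_sum (P : 𝒳 → 𝒴 → 𝒮 → ℝ) (h : 𝒳 → 𝒮 → 𝒴)
    (hdet : ∀ x y s, y ≠ h x s → P x y s = 0) (s : 𝒮) (f : 𝒴 → ℝ) :
    ∑ x, P x (h x s) s * f (h x s) = ∑ c, (∑ x, P x c s) * f c := by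
  have e : ∀ c : 𝒴, (∑ x, P x c s) * f c = ∑ x, P x c s * f c := fun c => Finset.sum_mul ..
  simp_rw [e]
  rw [Finset.sum_comm]
  apply Finset.sum_congr rfl; intro x _
  exact (det_sum P h hdet x s f).symm

lemma margS_eq_sum (P : 𝒳 → 𝒴 → 𝒮 → ℝ) (s : 𝒮) :
    margS P s = ∑ y, ∑ x, P x y s := Finset.sum_comm

lemma sum_margS (P : 𝒳 → 𝒴 → 𝒮 → ℝ) (hP1 : ∑ x, ∑ y, ∑ s, P x y s = 1) :
    ∑ s, margS P s = 1 := by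
  rw [← hP1, sum_rot]
  rfl

lemma condYS_nonneg (P : 𝒳 → 𝒴 → 𝒮 → ℝ) (hP0 : ∀ x y s, 0 ≤ P x y s)
    (hS : ∀ s, 0 < margS P s) (s : 𝒮) (y : 𝒴) : 0 ≤ condYS P s y :=
  div_nonneg (Finset.sum_nonneg fun x _ => hP0 x y s) (hS s).le

lemma condYS_sum (P : 𝒳 → 𝒴 → 𝒮 → ℝ) (hS : ∀ s, 0 < margS P s) (s : 𝒮) :
    ∑ y, condYS P s y = 1 := by
  unfold condYS
  rw [← Finset.sum_div, ← margS_eq_sum, div_self (hS s).ne']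

lemma PY_eq (P : 𝒳 → 𝒴 → 𝒮 → ℝ) (hS : ∀ s, 0 < margS P s) (s : 𝒮) (y : 𝒴) :
    (∑ x, P x y s) = margS P s * condYS P s y := by
  unfold condYS
  rw [mul_div_assoc', mul_comm, mul_div_assoc, div_self (hS s).ne', mul_one]

lemma joint_sum (P : 𝒳 → 𝒴 → 𝒮 → ℝ) (Q : 𝒳 → 𝒮 → 𝒴 → ℝ)
    (hQ1 : ∀ x s, ∑ y, Q x s y = 1) (s : 𝒮) :
    ∑ yh, jointYhatS P Q yh s = margS P s := by
  unfold jointYhatS margS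
  rw [Finset.sum_comm]
  apply Finset.sum_congr rfl; intro x _
  rw [Finset.sum_comm]
  apply Finset.sum_congr rfl; intro y _
  rw [← Finset.mul_sum, hQ1, mul_one]

lemma joint_eq (P : 𝒳 → 𝒴 → 𝒮 → ℝ) (Q : 𝒳 → 𝒮 → 𝒴 → ℝ) (hS : ∀ s, 0 < margS P s)
    (s : 𝒮) (yh : 𝒴) : jointYhatS P Q yh s = margS P s * condYhatS P Q s yh := by
  unfold condYhatS
  rw [mul_div_assoc', mul_comm, mul_div_assoc, div_self (hS s).ne', mul_one]

lemma condYhatS_sum (P : 𝒳 → 𝒴 → 𝒮 → ℝ) (Q : 𝒳 → 𝒮 → 𝒴 → ℝ)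
    (hQ1 : ∀ x s, ∑ y, Q x s y = 1) (hS : ∀ s, 0 < margS P s) (s : 𝒮) :
    ∑ yh, condYhatS P Q s yh = 1 := by
  unfold condYhatS
  rw [← Finset.sum_div, joint_sum P Q hQ1, div_self (hS s).ne']

lemma margYhat_eq (P : 𝒳 → 𝒴 → 𝒮 → ℝ) (Q : 𝒳 → 𝒮 → 𝒴 → ℝ) (hS : ∀ s, 0 < margS P s)
    (yh : 𝒴) : margYhat P Q yh = ∑ s, margS P s * condYhatS P Q s yh := by
  unfold margYhat
  exact Finset.sum_congr rfl fun s _ => joint_eq P Q hS s yh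

/-- The per-group DDP bound: `2 TV(μ_s, ν) ≤ DDP`. -/
lemma tv_le_ddp (P : 𝒳 → 𝒴 → 𝒮 → ℝ) (Q : 𝒳 → 𝒮 → 𝒴 → ℝ) (s : 𝒮) :
    2 * TV (condYhatS P Q s) (margYhat P Q) ≤ DDP P Q := by
  have e : DDP P Q = ∑ s, ∑ yh, |condYhatS P Q s yh - margYhat P Q yh| := Finset.sum_comm
  have h1 : ∑ yh, |condYhatS P Q s yh - margYhat P Q yh|
      ≤ ∑ s, ∑ yh, |condYhatS P Q s yh - margYhat P Q yh| := by
    apply Finset.single_le_sum (f := fun s => ∑ yh, |condYhatS P Q s yh - margYhat P Q yh|)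
      (fun s _ => Finset.sum_nonneg fun yh _ => abs_nonneg _) (mem_univ s)
  rw [e]
  unfold TV
  linarith

lemma sum_tv_le_ddp (P : 𝒳 → 𝒴 → 𝒮 → ℝ) (Q : 𝒳 → 𝒮 → 𝒴 → ℝ) :
    ∑ s, TV (condYhatS P Q s) (margYhat P Q) ≤ DDP P Q / 2 := by
  have e : DDP P Q = ∑ s, ∑ yh, |condYhatS P Q s yh - margYhat P Q yh| := Finset.sum_comm
  rw [e, Finset.sum_div]
  apply Finset.sum_le_sum
  intro s _
  unfold TV
  ring_nf
  exact le_rfl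

lemma mul_min' (k a b : ℝ) (hk : 0 ≤ k) : k * min a b = min (k * a) (k * b) := by
  rcases le_total a b with hab | hab
  · rw [min_eq_left hab, min_eq_left (mul_le_mul_of_nonneg_left hab hk)]
  · rw [min_eq_right hab, min_eq_right (mul_le_mul_of_nonneg_left hab hk)]

/-- Risk lower bound: `risk(Q) ≥ ∑_s P_S(s) TV(P_{Y|s}, P_{Ŷ|s})`. -/
lemma risk_lb (P : 𝒳 → 𝒴 → 𝒮 → ℝ) (Q : 𝒳 → 𝒮 → 𝒴 → ℝ)
    (hP0 : ∀ x y s, 0 ≤ P x y s) (hS : ∀ s, 0 < margS P s) (hQ : IsRule Q) :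
    ∑ s, margS P s * TV (condYS P s) (condYhatS P Q s) ≤ risk P Q := by
  obtain ⟨hQ0, hQ1⟩ := hQ
  rw [risk_eq P Q hQ1, sum_rot]
  apply Finset.sum_le_sum
  intro s _
  have hQle1 : ∀ x y, Q x s y ≤ 1 := by
    intro x y
    rw [← hQ1 x s]
    exact Finset.single_le_sum (fun y _ => hQ0 x s y) (mem_univ y)
  -- the matched mass
  have key : ∑ x, ∑ y, P x y s * Q x s y
      ≤ ∑ y, min (∑ x, P x y s) (jointYhatS P Q y s) := by
    rw [Finset.sum_comm]
    apply Finset.sum_le_sum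
    intro y _
    apply le_min
    · apply Finset.sum_le_sum
      intro x _
      calc P x y s * Q x s y ≤ P x y s * 1 :=
            mul_le_mul_of_nonneg_left (hQle1 x y) (hP0 x y s)
        _ = P x y s := mul_one _
    · unfold jointYhatS
      apply Finset.sum_le_sum
      intro x _
      calc P x y s * Q x s y ≤ (∑ y', P x y' s) * Q x s y := by
            apply mul_le_mul_of_nonneg_right _ (hQ0 x s y)
            exact Finset.single_le_sum (fun y' _ => hP0 x y' s) (mem_univ y)
        _ = ∑ y', P x y' s * Q x s y := Finset.sum_mul ..
  have emin : ∑ y, min (∑ x, P x y s) (jointYhatS P Q y s)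
      = margS P s * (1 - TV (condYS P s) (condYhatS P Q s)) := by
    have e1 : ∀ y : 𝒴, min (∑ x, P x y s) (jointYhatS P Q y s)
        = margS P s * min (condYS P s y) (condYhatS P Q s y) := by
      intro y
      rw [PY_eq P hS, joint_eq P Q hS, mul_min' _ _ _ (hS s).le]
    simp_rw [e1]
    rw [← Finset.mul_sum,
      sum_min _ _ (condYS_sum P hS s) (condYhatS_sum P Q hQ1 hS s)]
  have elhs : ∑ x, ∑ y, P x y s * (1 - Q x s y)
      = margS P s - ∑ x, ∑ y, P x y s * Q x s y := by
    unfold margS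
    rw [← Finset.sum_sub_distrib]
    apply Finset.sum_congr rfl; intro x _
    rw [← Finset.sum_sub_distrib]
    apply Finset.sum_congr rfl; intro y _
    ring
  rw [elhs]
  have := key.trans_eq emin
  nlinarith [tv_nonneg (condYS P s) (condYhatS P Q s), (hS s).le]

/-- The comparator rule: maximal coupling toward the majority label distribution. -/
def Qstar (P : 𝒳 → 𝒴 → 𝒮 → ℝ) (h : 𝒳 → 𝒮 → 𝒴) (smax : 𝒮) (x : 𝒳) (s : 𝒮) (y : 𝒴) : ℝ :=
  kernel (condYS P s) (condYS P smax) (h x s) y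

lemma Qstar_isRule (P : 𝒳 → 𝒴 → 𝒮 → ℝ) (hP0 : ∀ x y s, 0 ≤ P x y s)
    (hS : ∀ s, 0 < margS P s) (h : 𝒳 → 𝒮 → 𝒴) (smax : 𝒮) :
    IsRule (Qstar P h smax) := by
  constructor
  · intro x s y
    exact kernel_nonneg _ _ (condYS_nonneg P hP0 hS s) (condYS_nonneg P hP0 hS smax) _ _
  · intro x s
    exact kernel_row_sum _ _ (condYS_sum P hS s) (condYS_sum P hS smax) _

lemma Qstar_joint (P : 𝒳 → 𝒴 → 𝒮 → ℝ) (hP0 : ∀ x y s, 0 ≤ P x y s)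
    (hS : ∀ s, 0 < margS P s) (h : 𝒳 → 𝒮 → 𝒴)
    (hdet : ∀ x y s, y ≠ h x s → P x y s = 0) (smax : 𝒮) (s : 𝒮) (yh : 𝒴) :
    jointYhatS P (Qstar P h smax) yh s = margS P s * condYS P smax yh := by
  unfold jointYhatS Qstar
  have e1 : ∀ x : 𝒳, ∑ y, P x y s * kernel (condYS P s) (condYS P smax) (h x s) yh
      = P x (h x s) s * kernel (condYS P s) (condYS P smax) (h x s) yh := fun x =>
    det_sum P h hdet x s _
  simp_rw [e1]
  rw [fiber_sum P h hdet s (fun c => kernel (condYS P s) (condYS P smax) c yh)]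
  have e2 : ∀ c : 𝒴, (∑ x, P x c s) * kernel (condYS P s) (condYS P smax) c yh
      = margS P s * (condYS P s c * kernel (condYS P s) (condYS P smax) c yh) := by
    intro c
    rw [PY_eq P hS, mul_assoc]
  simp_rw [e2]
  rw [← Finset.mul_sum,
    kernel_marginal _ _ (condYS_nonneg P hP0 hS s) (condYS_nonneg P hP0 hS smax)
      (condYS_sum P hS s) (condYS_sum P hS smax) yh]

lemma Qstar_ddp (P : 𝒳 → 𝒴 → 𝒮 → ℝ) (hP0 : ∀ x y s, 0 ≤ P x y s)
    (hP1 : ∑ x, ∑ y, ∑ s, P x y s = 1) (hS : ∀ s, 0 < margS P s) (h : 𝒳 → 𝒮 → 𝒴)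
    (hdet : ∀ x y s, y ≠ h x s → P x y s = 0) (smax : 𝒮) :
    DDP P (Qstar P h smax) = 0 := by
  have hcond : ∀ s yh, condYhatS P (Qstar P h smax) s yh = condYS P smax yh := by
    intro s yh
    unfold condYhatS
    rw [Qstar_joint P hP0 hS h hdet smax s yh, mul_comm, mul_div_assoc,
      div_self (hS s).ne', mul_one]
  have hmarg : ∀ yh, margYhat P (Qstar P h smax) yh = condYS P smax yh := by
    intro yh
    unfold margYhat
    have : ∀ s : 𝒮, jointYhatS P (Qstar P h smax) yh s = margS P s * condYS P smax yh :=
      fun s => Qstar_joint P hP0 hS h hdet smax s yh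
    simp_rw [this]
    rw [← Finset.sum_mul, sum_margS P hP1, one_mul]
  unfold DDP
  apply Finset.sum_eq_zero
  intro yh _
  apply Finset.sum_eq_zero
  intro s _
  rw [hcond, hmarg, sub_self, abs_zero]

lemma Qstar_risk (P : 𝒳 → 𝒴 → 𝒮 → ℝ) (hP0 : ∀ x y s, 0 ≤ P x y s)
    (hS : ∀ s, 0 < margS P s) (h : 𝒳 → 𝒮 → 𝒴)
    (hdet : ∀ x y s, y ≠ h x s → P x y s = 0) (smax : 𝒮) :
    risk P (Qstar P h smax) ≤ ∑ s, margS P s * TV (condYS P s) (condYS P smax) := by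
  rw [risk_eq P _ (Qstar_isRule P hP0 hS h smax).2, sum_rot]
  apply Finset.sum_le_sum
  intro s _
  set a := condYS P s with hadef
  set q := condYS P smax with hqdef
  have e1 : ∀ x : 𝒳, ∑ y, P x y s * (1 - Qstar P h smax x s y)
      = P x (h x s) s * (1 - kernel a q (h x s) (h x s)) := fun x =>
    det_sum P h hdet x s (fun y => 1 - kernel a q (h x s) y)
  simp_rw [e1]
  rw [fiber_sum P h hdet s (fun c => 1 - kernel a q c c)]
  have e2 : ∀ c : 𝒴, (∑ x, P x c s) * (1 - kernel a q c c)
      = margS P s * (a c * (1 - kernel a q c c)) := by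
    intro c
    rw [PY_eq P hS, mul_assoc]
  simp_rw [e2]
  rw [← Finset.mul_sum]
  apply mul_le_mul_of_nonneg_left _ (hS s).le
  calc ∑ c, a c * (1 - kernel a q c c)
      ≤ ∑ c, (a c - min (a c) (q c)) := by
        apply Finset.sum_le_sum
        intro c _
        exact kernel_diag a q (condYS_nonneg P hP0 hS s) (condYS_nonneg P hP0 hS smax) c
    _ = TV a q := by
        rw [Finset.sum_sub_distrib, condYS_sum P hS s,
          sum_min a q (condYS_sum P hS s) (condYS_sum P hS smax)]
        ring

/-- TV barycenter inequality for a majority weight. -/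
lemma barycenter [DecidableEq 𝒮] (w : 𝒮 → ℝ) (hw0 : ∀ s, 0 ≤ w s) (hw1 : ∑ s, w s = 1)
    (p : 𝒮 → 𝒴 → ℝ) (ν q : 𝒴 → ℝ) (smax : 𝒮) (hq : p smax = q) :
    ∑ s, w s * TV (p s) q + (2 * w smax - 1) * TV q ν ≤ ∑ s, w s * TV (p s) ν := by
  have e1 : ∑ s, w s * TV (p s) q
      = w smax * TV (p smax) q + ∑ s ∈ univ.erase smax, w s * TV (p s) q :=
    (Finset.add_sum_erase univ _ (mem_univ smax)).symm
  have e2 : ∑ s, w s * TV (p s) ν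
      = w smax * TV (p smax) ν + ∑ s ∈ univ.erase smax, w s * TV (p s) ν :=
    (Finset.add_sum_erase univ _ (mem_univ smax)).symm
  have hz : TV (p smax) q = 0 := by rw [hq]; exact tv_self q
  have hm : TV (p smax) ν = TV q ν := by rw [hq]
  have herase : ∑ s ∈ univ.erase smax, w s = 1 - w smax := by
    have := Finset.add_sum_erase univ w (mem_univ smax)
    rw [hw1] at this
    linarith
  have key : ∑ s ∈ univ.erase smax, w s * TV (p s) q
      ≤ ∑ s ∈ univ.erase smax, w s * TV (p s) ν + (1 - w smax) * TV q ν := by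
    rw [← herase, Finset.sum_mul, ← Finset.sum_add_distrib]
    apply Finset.sum_le_sum
    intro s _
    have := tv_triangle (p s) ν q
    have h2 := tv_symm ν q
    nlinarith [hw0 s]
  rw [e1, e2, hz, hm]
  linarith

/-- **Theorem 1 (DDP case).** If `Y = h(X, S)` is deterministic, the majority sensitive
attribute satisfies `P_S(s_max) = 1/2 + δ` with `δ > 0`, and `Q` is an optimal randomized
prediction rule among those with `DDP(Ŷ, S) ≤ ε`, then for every `s`,
`TV(P_{Ŷ|S=s}, P_{Y|S=s_max}) ≤ (1/2 + 1/(4δ)) ε`. -/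
theorem ddp_fair_optimal_inductive_bias
    (P : 𝒳 → 𝒴 → 𝒮 → ℝ)
    (hP0 : ∀ x y s, 0 ≤ P x y s)
    (hP1 : ∑ x, ∑ y, ∑ s, P x y s = 1)
    (hS : ∀ s, 0 < margS P s)
    (h : 𝒳 → 𝒮 → 𝒴) (hdet : ∀ x y s, y ≠ h x s → P x y s = 0)
    (smax : 𝒮) (δ : ℝ) (hδ : 0 < δ) (hsmax : margS P smax = 1 / 2 + δ)
    (ε : ℝ)
    (Q : 𝒳 → 𝒮 → 𝒴 → ℝ) (hQ : IsRule Q)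
    (hfair : DDP P Q ≤ ε)
    (hopt : ∀ Q' : 𝒳 → 𝒮 → 𝒴 → ℝ, IsRule Q' → DDP P Q' ≤ ε → risk P Q ≤ risk P Q') :
    ∀ s, TV (condYhatS P Q s) (condYS P smax) ≤ (1 / 2 + 1 / (4 * δ)) * ε := by
  classical
  intro s0
  set q : 𝒴 → ℝ := condYS P smax with hqdef
  set ν : 𝒴 → ℝ := margYhat P Q with hνdef
  set μ : 𝒮 → 𝒴 → ℝ := condYhatS P Q with hμdef
  have hε0 : 0 ≤ ε := le_trans (Finset.sum_nonneg fun yh _ =>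
    Finset.sum_nonneg fun s _ => abs_nonneg _) hfair
  -- ε/2 bounds
  have hddp_s : ∀ s, TV (μ s) ν ≤ ε / 2 := fun s => by
    have := (tv_le_ddp P Q s).trans hfair
    linarith
  have hddp_sum : ∑ s, TV (μ s) ν ≤ ε / 2 := by
    have := (sum_tv_le_ddp P Q).trans (by linarith : DDP P Q / 2 ≤ ε / 2)
    exact this
  have hw0 : ∀ s, (0:ℝ) ≤ margS P s := fun s => (hS s).le
  have hw1 : ∑ s, margS P s = 1 := sum_margS P hP1
  have hwle1 : ∀ s, margS P s ≤ 1 := fun s => by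
    rw [← hw1]
    exact Finset.single_le_sum (fun s _ => hw0 s) (mem_univ s)
  -- risk chain
  have step1 : ∑ s, margS P s * TV (condYS P s) q + 2 * δ * TV q ν
      ≤ ∑ s, margS P s * TV (condYS P s) ν := by
    have := barycenter (margS P) hw0 hw1 (condYS P) ν q smax rfl
    rw [hsmax] at this
    have e : 2 * (1/2 + δ) - 1 = 2 * δ := by ring
    rw [e] at this
    exact this
  have step2 : ∑ s, margS P s * TV (condYS P s) ν
      ≤ ∑ s, margS P s * TV (condYS P s) (μ s) + ε / 2 := by
    have h1 : ∑ s, margS P s * TV (condYS P s) ν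
        ≤ ∑ s, (margS P s * TV (condYS P s) (μ s) + TV (μ s) ν) := by
      apply Finset.sum_le_sum
      intro s _
      have htri := tv_triangle (condYS P s) (μ s) ν
      have h2 : margS P s * TV (condYS P s) ν
          ≤ margS P s * (TV (condYS P s) (μ s) + TV (μ s) ν) :=
        mul_le_mul_of_nonneg_left htri (hw0 s)
      have h3 : margS P s * TV (μ s) ν ≤ TV (μ s) ν := by
        nlinarith [tv_nonneg (μ s) ν, hwle1 s, hw0 s]
      nlinarith
    rw [Finset.sum_add_distrib] at h1
    linarith
  have step3 : ∑ s, margS P s * TV (condYS P s) (μ s) ≤ risk P Q :=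
    risk_lb P Q hP0 hS hQ
  have step4 : risk P Q ≤ ∑ s, margS P s * TV (condYS P s) q := by
    have hrule := Qstar_isRule P hP0 hS h smax
    have hddp0 : DDP P (Qstar P h smax) ≤ ε := by
      rw [Qstar_ddp P hP0 hP1 hS h hdet smax]; exact hε0
    exact (hopt _ hrule hddp0).trans (Qstar_risk P hP0 hS h hdet smax)
  -- conclude TV q ν ≤ ε / (4δ)
  have hT : TV q ν ≤ ε / (4 * δ) := by
    have h2δ : 2 * δ * TV q ν ≤ ε / 2 := by linarith
    rw [le_div_iff₀ (by linarith : (0:ℝ) < 4 * δ)]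
    nlinarith
  -- final triangle
  have := tv_triangle (μ s0) ν q
  have hsymm := tv_symm ν q
  have hfinal : TV (μ s0) q ≤ ε / 2 + ε / (4 * δ) := by
    have := hddp_s s0
    linarith
  calc TV (μ s0) q ≤ ε / 2 + ε / (4 * δ) := hfinal
    _ = (1 / 2 + 1 / (4 * δ)) * ε := by field_simp
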